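/- With f_{μ,0}, f_{μ,1} the truncated renormalized densities from the planted-clique reduction, define h_{μ,0} = (f_{μ,0} + f_{μ,1})/2 and h_{μ,1} = δ_N f_{μ,1} + (1 − δ_N)(f_{μ,0} + f_{μ,1})/2. There exists an absolute constant C > 0 such that for all integers N ≥ 12, k ≤ N/12 and all |μ| ≤ 3√(η_N log N): TV(h_{μ,0}, φ_0) ≤ C N^{-3} and TV(h_{μ,1}, φ̄_μ) ≤ C N^{-3}. -/

import Mathlib

open Real MeasureTheory Set Filter Topology
noncomputable def gpdf (μ x : ℝ) : ℝ :=
  (Real.sqrt (2 * Real.pi))⁻¹ * Real.exp (-(x - μ) ^ 2 / 2)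

lemma gpdf_eq_gaussian (ν : ℝ) : gpdf ν = ProbabilityTheory.gaussianPDFReal ν 1 := by
  funext x
  unfold gpdf ProbabilityTheory.gaussianPDFReal
  norm_num

lemma gpdf_nonneg (ν x : ℝ) : 0 ≤ gpdf ν x := by
  unfold gpdf
  positivity

lemma gpdf_integrable (ν : ℝ) : Integrable (gpdf ν) := by
  rw [gpdf_eq_gaussian]
  exact ProbabilityTheory.integrable_gaussianPDFReal ν 1

lemma gpdf_integral (ν : ℝ) : ∫ x, gpdf ν x = 1 := by
  rw [gpdf_eq_gaussian]
  exact ProbabilityTheory.integral_gaussianPDFReal_eq_one ν one_ne_zero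

lemma gpdf_continuous (ν : ℝ) : Continuous (gpdf ν) := by
  unfold gpdf
  fun_prop

lemma gauss_antideriv (c a : ℝ) (hc : c ≤ a) :
    IntegrableOn (fun x => (x - c) * Real.exp (-(x - c) ^ 2 / 2)) (Ioi a) ∧
    ∫ x in Ioi a, (x - c) * Real.exp (-(x - c) ^ 2 / 2) = Real.exp (-(a - c) ^ 2 / 2) := by
  have hderiv : ∀ x ∈ Ioi a, HasDerivAt (fun y => -Real.exp (-(y - c) ^ 2 / 2))
      ((x - c) * Real.exp (-(x - c) ^ 2 / 2)) x := by
    intro x _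
    have h1 : HasDerivAt (fun y : ℝ => -(y - c) ^ 2 / 2) (-(x - c)) x := by
      have h0 : HasDerivAt (fun y : ℝ => y - c) 1 x := (hasDerivAt_id x).sub_const c
      have := (h0.pow 2).neg.div_const 2
      refine this.congr_deriv ?_
      simp
      ring
    have := (h1.exp).neg
    refine this.congr_deriv ?_
    ring
  have hcont : ContinuousWithinAt (fun y => -Real.exp (-(y - c) ^ 2 / 2)) (Ici a) a := by
    apply Continuous.continuousWithinAt
    fun_prop
  have hpos : ∀ x ∈ Ioi a, 0 ≤ (x - c) * Real.exp (-(x - c) ^ 2 / 2) := by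
    intro x hx
    have : (0:ℝ) ≤ x - c := by
      have := hx.out
      linarith
    positivity
  have htend : Tendsto (fun y => -Real.exp (-(y - c) ^ 2 / 2)) atTop (𝓝 0) := by
    rw [show (0:ℝ) = -0 by ring]
    apply Tendsto.neg
    apply Real.tendsto_exp_atBot.comp
    have h2 : Tendsto (fun y : ℝ => (y - c) ^ 2) atTop atTop :=
      (tendsto_pow_atTop (two_ne_zero)).comp (tendsto_atTop_add_const_right atTop (-c) tendsto_id)
    exact (tendsto_neg_atTop_atBot.comp h2).atBot_div_const (by norm_num)
  refine ⟨integrableOn_Ioi_deriv_of_nonneg hcont hderiv hpos htend, ?_⟩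
  rw [integral_Ioi_of_hasDerivAt_of_nonneg hcont hderiv hpos htend]
  ring

lemma gpdf_tail (ν a : ℝ) (h : ν + 1 ≤ a) :
    ∫ x in Ioi a, gpdf ν x ≤ Real.exp (-(a - ν) ^ 2 / 2) := by
  obtain ⟨hint, hval⟩ := gauss_antideriv ν a (by linarith)
  have hmono : ∫ x in Ioi a, gpdf ν x
      ≤ ∫ x in Ioi a, (Real.sqrt (2 * Real.pi))⁻¹ * ((x - ν) * Real.exp (-(x - ν) ^ 2 / 2)) := by
    apply setIntegral_mono_on ((gpdf_integrable ν).integrableOn) (hint.const_mul _)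
      measurableSet_Ioi
    intro x hx
    unfold gpdf
    have h1 : (1:ℝ) ≤ x - ν := by have := hx.out; linarith
    have h2 : (0:ℝ) < (Real.sqrt (2 * Real.pi))⁻¹ := by positivity
    have h3 := Real.exp_pos (-(x - ν) ^ 2 / 2)
    have h5 : Real.exp (-(x - ν) ^ 2 / 2) ≤ (x - ν) * Real.exp (-(x - ν) ^ 2 / 2) := by
      nlinarith
    exact mul_le_mul_of_nonneg_left h5 h2.le
  rw [MeasureTheory.integral_const_mul, hval] at hmono
  have h4 : (Real.sqrt (2 * Real.pi))⁻¹ ≤ 1 := by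
    apply inv_le_one_of_one_le₀
    rw [show (1:ℝ) = Real.sqrt 1 by simp]
    apply Real.sqrt_le_sqrt
    nlinarith [Real.pi_gt_three]
  nlinarith [Real.exp_pos (-(a - ν) ^ 2 / 2), Real.sqrt_nonneg (2 * Real.pi)]

lemma gpdf_tail_two (ν a : ℝ) (h : |ν| + 1 ≤ a) :
    ∫ x in (Icc (-a) a)ᶜ, gpdf ν x ≤ 2 * Real.exp (-(a - |ν|) ^ 2 / 2) := by
  have habs := abs_nonneg ν
  have hν : ν ≤ |ν| := le_abs_self ν
  have hν' : -ν ≤ |ν| := neg_le_abs ν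
  have hcompl : (Icc (-a) a)ᶜ = Iio (-a) ∪ Ioi a := by
    ext x
    simp only [mem_compl_iff, mem_Icc, mem_union, mem_Iio, mem_Ioi, not_and_or, not_le]
  rw [hcompl]
  rw [setIntegral_union (by
        apply Set.disjoint_left.2
        intro x h1 h2
        simp only [mem_Iio, mem_Ioi] at h1 h2
        linarith) measurableSet_Ioi ((gpdf_integrable ν).integrableOn)
      ((gpdf_integrable ν).integrableOn)]
  have tail1 : ∫ x in Ioi a, gpdf ν x ≤ Real.exp (-(a - |ν|) ^ 2 / 2) := by
    refine le_trans (gpdf_tail ν a (by linarith)) ?_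
    apply Real.exp_le_exp.2
    nlinarith
  have tail2 : ∫ x in Iio (-a), gpdf ν x ≤ Real.exp (-(a - |ν|) ^ 2 / 2) := by
    rw [setIntegral_congr_set Iio_ae_eq_Iic]
    have heq : ∫ x in Iic (-a), gpdf ν x = ∫ x in Ioi a, gpdf (-ν) x := by
      rw [← integral_comp_neg_Ioi]
      apply setIntegral_congr_fun measurableSet_Ioi
      intro x _
      show (Real.sqrt (2 * Real.pi))⁻¹ * Real.exp (-(-x - ν) ^ 2 / 2) = _
      rw [show -(-x - ν) ^ 2 = -(x - -ν) ^ 2 by ring]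
      rfl
    rw [heq]
    refine le_trans (gpdf_tail (-ν) a (by linarith)) ?_
    apply Real.exp_le_exp.2
    nlinarith
  linarith

lemma gauss_diff_bound (μ x : ℝ) (h : |μ * x| ≤ 1) :
    |(gpdf μ x + gpdf (-μ) x) / 2 - gpdf 0 x| ≤ ((μ * x) ^ 2 + μ ^ 2 / 2) * gpdf 0 x := by
  have hid : (gpdf μ x + gpdf (-μ) x) / 2 - gpdf 0 x
      = ((Real.exp (μ * x - μ ^ 2 / 2) + Real.exp (-(μ * x) - μ ^ 2 / 2)) / 2 - 1) * gpdf 0 x := by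
    unfold gpdf
    rw [show -(x - μ) ^ 2 / 2 = (μ * x - μ ^ 2 / 2) + -(x - 0) ^ 2 / 2 by ring,
      show -(x - -μ) ^ 2 / 2 = (-(μ * x) - μ ^ 2 / 2) + -(x - 0) ^ 2 / 2 by ring,
      Real.exp_add, Real.exp_add]
    ring
  rw [hid, abs_mul, abs_of_nonneg (gpdf_nonneg 0 x)]
  apply mul_le_mul_of_nonneg_right _ (gpdf_nonneg 0 x)
  rw [abs_le]
  set a := μ * x
  have ha : |(-a)| = |a| := abs_neg a
  have e1 := Real.abs_exp_sub_one_sub_id_le h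
  have e2 := Real.abs_exp_sub_one_sub_id_le (by rw [ha]; exact h)
  rw [abs_le] at e1 e2
  have hb : (0:ℝ) ≤ μ ^ 2 / 2 := by positivity
  constructor
  · -- lower bound
    have k1 : Real.exp (a - μ ^ 2 / 2) = Real.exp a * Real.exp (-(μ ^ 2 / 2)) := by
      rw [← Real.exp_add]; ring_nf
    have k2 : Real.exp (-a - μ ^ 2 / 2) = Real.exp (-a) * Real.exp (-(μ ^ 2 / 2)) := by
      rw [← Real.exp_add]; ring_nf
    have k3 : Real.exp a * Real.exp (-a) = 1 := by rw [← Real.exp_add]; simp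
    have k4 : Real.exp a + Real.exp (-a) ≥ 2 := by
      nlinarith [sq_nonneg (Real.exp a - Real.exp (-a)), Real.exp_pos a, Real.exp_pos (-a)]
    have k5 : 1 - μ ^ 2 / 2 ≤ Real.exp (-(μ ^ 2 / 2)) := by
      have := Real.add_one_le_exp (-(μ ^ 2 / 2))
      linarith
    have k6 : Real.exp (-(μ ^ 2 / 2)) ≤ 1 := by
      rw [Real.exp_le_one_iff]
      linarith
    rw [k1, k2]
    nlinarith [Real.exp_pos (-(μ ^ 2 / 2)), sq_nonneg a]
  · -- upper bound
    have k7 : Real.exp (a - μ ^ 2 / 2) ≤ Real.exp a := Real.exp_le_exp.2 (by linarith)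
    have k8 : Real.exp (-a - μ ^ 2 / 2) ≤ Real.exp (-a) := Real.exp_le_exp.2 (by linarith)
    nlinarith [sq_nonneg a]

noncomputable def fdens (N : ℕ) (δ M μ s x : ℝ) : ℝ :=
  Set.indicator (Set.Icc (-(3 * Real.sqrt (Real.log N))) (3 * Real.sqrt (Real.log N)))
    (fun y => M * (gpdf 0 y + s * δ⁻¹ * ((gpdf μ y + gpdf (-μ) y) / 2 - gpdf 0 y))) x

lemma tv_bound (I : Set ℝ) (hI : MeasurableSet I) (G W : ℝ → ℝ) (c e : ℝ)
    (hGi : Integrable G) (hptI : ∀ x ∈ I, |G x| ≤ c * gpdf 0 x)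
    (hptC : ∀ x ∈ Iᶜ, |G x| = W x) (hc : 0 ≤ c)
    (hWc : ∫ x in Iᶜ, W x ≤ e) :
    ∫ x, |G x| ≤ c + e := by
  have h := integral_add_compl hI hGi.abs (f := fun x => |G x|)
  have h1 : ∫ x in I, |G x| ≤ c * ∫ x in I, gpdf 0 x := by
    rw [← MeasureTheory.integral_const_mul]
    exact setIntegral_mono_on hGi.abs.integrableOn
      (((gpdf_integrable 0).const_mul c).integrableOn) hI hptI
  have h2 : ∫ x in Iᶜ, |G x| = ∫ x in Iᶜ, W x := setIntegral_congr_fun hI.compl hptC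
  have h4 : ∫ x in I, gpdf 0 x ≤ 1 := by
    have := setIntegral_le_integral (s := I) (gpdf_integrable 0)
      (Filter.Eventually.of_forall (fun x => gpdf_nonneg 0 x))
    rw [gpdf_integral 0] at this
    exact this
  have h3 : c * ∫ x in I, gpdf 0 x ≤ c := by nlinarith
  linarith

lemma abs_comb_bound (a b A B P c : ℝ) (ha : |a| ≤ c) (hb : |b| ≤ c)
    (hA : |A| ≤ 3*P) (hB : |B| ≤ 3*P) (hc : 0 ≤ c) : |(a*A + b*B)/2| ≤ 3*c*P := by
  have h1 : |a*A| ≤ c*(3*P) := by rw [abs_mul]; exact mul_le_mul ha hA (abs_nonneg _) hc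
  have h2 : |b*B| ≤ c*(3*P) := by rw [abs_mul]; exact mul_le_mul hb hB (abs_nonneg _) hc
  have h3 : |a*A + b*B| ≤ |a*A| + |b*B| := abs_add_le _ _
  rw [abs_div, abs_two]
  linarith

lemma abs_comb_bound2 (δ a b A B P c : ℝ) (hδ0 : 0 ≤ δ) (hδ1 : δ ≤ 1)
    (ha : |a| ≤ c) (hb : |b| ≤ c) (hA : |A| ≤ 3*P) (hB : |B| ≤ 3*P) (hc : 0 ≤ c) :
    |δ*(b*B) + (1-δ)*((a*A + b*B)/2)| ≤ 3*c*P := by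
  have h0 := abs_comb_bound a b A B P c ha hb hA hB hc
  have h1 : |b*B| ≤ c*(3*P) := by rw [abs_mul]; exact mul_le_mul hb hB (abs_nonneg _) hc
  calc |δ*(b*B) + (1-δ)*((a*A + b*B)/2)|
      ≤ |δ*(b*B)| + |(1-δ)*((a*A + b*B)/2)| := abs_add_le _ _
    _ = δ*|b*B| + (1-δ)*|(a*A + b*B)/2| := by
        rw [abs_mul δ, abs_mul (1-δ), abs_of_nonneg hδ0,
          abs_of_nonneg (by linarith : (0:ℝ) ≤ 1-δ)]
    _ ≤ δ*(c*(3*P)) + (1-δ)*(3*c*P) :=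
        add_le_add (mul_le_mul_of_nonneg_left h1 hδ0)
          (mul_le_mul_of_nonneg_left h0 (by linarith))
    _ = 3*c*P := by ring

set_option maxHeartbeats 4000000 in
lemma core (NR L T δ r tl E0 E1 M0 M1 μ : ℝ) (I : Set ℝ)
    (hI : MeasurableSet I) (hIdef : I = Icc (-T) T)
    (hN12 : 12 ≤ NR) (hL : 2 ≤ L) (hexpL : Real.exp L = NR)
    (hT2 : T^2 = 9*L)
    (hδ0 : 0 ≤ δ) (hδ12 : δ ≤ 1/12) (hr0 : 0 ≤ r) (hrN : r ≤ NR)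
    (hrδ : ∀ x : ℝ, δ * (r * x) = x ∨ δ = 0)
    (hμδ : δ = 0 → μ = 0)
    (hμsq : 5*L*μ^2 ≤ δ) (hrμ : r * (5*L*μ^2) ≤ 1)
    (htldef : tl = Real.exp (-(17/4)*L))
    (hE0def : E0 = ∫ x in Iᶜ, gpdf 0 x)
    (hE1def : E1 = ∫ x in Iᶜ, (gpdf μ x + gpdf (-μ) x)/2)
    (hE0nn : 0 ≤ E0) (hE1nn : 0 ≤ E1) (hE0 : E0 ≤ 2*tl) (hE1 : E1 ≤ 2*tl)
    (hIΦ : ∫ x in I, gpdf 0 x = 1 - E0)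
    (hM0 : 0 < M0) (hM1 : 0 < M1)
    (hf0 : M0 * (1 - E0 + -1 * r * (E0 - E1)) = 1)
    (hf1 : M1 * (1 - E0 + 1 * r * (E0 - E1)) = 1) :
    (1/2) * (∫ x, |(I.indicator (fun y => M0 * (gpdf 0 y
          + -1 * r * ((gpdf μ y + gpdf (-μ) y)/2 - gpdf 0 y))) x
        + I.indicator (fun y => M1 * (gpdf 0 y
          + 1 * r * ((gpdf μ y + gpdf (-μ) y)/2 - gpdf 0 y))) x)/2 - gpdf 0 x|)
      ≤ 100/NR^3
    ∧ (1/2) * (∫ x, |δ * I.indicator (fun y => M1 * (gpdf 0 y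
          + 1 * r * ((gpdf μ y + gpdf (-μ) y)/2 - gpdf 0 y))) x
        + (1-δ) * ((I.indicator (fun y => M0 * (gpdf 0 y
          + -1 * r * ((gpdf μ y + gpdf (-μ) y)/2 - gpdf 0 y))) x
          + I.indicator (fun y => M1 * (gpdf 0 y
          + 1 * r * ((gpdf μ y + gpdf (-μ) y)/2 - gpdf 0 y))) x)/2)
        - (gpdf μ x + gpdf (-μ) x)/2|)
      ≤ 100/NR^3 := by
  have hNpos : (0:ℝ) < NR := by linarith
  have hL0 : (0:ℝ) ≤ L := by linarith
  have htl0 : 0 < tl := by rw [htldef]; exact Real.exp_pos _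
  -- numeric facts
  have hNtlexp : NR*tl = Real.exp (L + -(17/4)*L) := by
    rw [Real.exp_add, hexpL, htldef]
  have hNtl100 : NR*tl ≤ 1/100 := by
    have h2 : L + -(17/4)*L ≤ -(13/2) := by linarith
    have h3 : Real.exp (-(13/2)) ≤ 1/100 := by
      rw [Real.exp_neg]
      rw [inv_le_comm₀ (Real.exp_pos _) (by norm_num)]
      have e1 : Real.exp 6 ≤ Real.exp (13/2) := Real.exp_le_exp.2 (by norm_num)
      have e2 : Real.exp 6 = Real.exp 1 ^ (6:ℕ) := by
        rw [← Real.exp_nat_mul]; norm_num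
      have e3 : (2.71:ℝ)^(6:ℕ) ≤ Real.exp 1 ^ (6:ℕ) :=
        pow_le_pow_left₀ (by norm_num) (by linarith [Real.exp_one_gt_d9]) 6
      have e4 : (100:ℝ) ≤ (2.71:ℝ)^(6:ℕ) := by norm_num
      linarith
    linarith [Real.exp_le_exp.2 h2, hNtlexp.le]
  have hNtl3 : NR*tl ≤ (NR^3)⁻¹ := by
    have h2 : L + -(17/4)*L ≤ -(3*L) := by linarith
    have h3 : Real.exp (-(3*L)) = (NR^3)⁻¹ := by
      rw [Real.exp_neg]
      congr 1
      rw [show 3*L = L+L+L by ring, Real.exp_add, Real.exp_add, hexpL]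
      ring
    have h4 := Real.exp_le_exp.2 h2
    rw [h3] at h4
    linarith [hNtlexp.le]
  have htlN : tl ≤ NR*tl := by nlinarith
  -- bounds on M0 M1
  have hS : ∀ s : ℝ, |s| ≤ 1 → |(1 - E0) + s*r*(E0-E1) - 1| ≤ 6*NR*tl := by
    intro s hs
    have h1 : (1 - E0) + s*r*(E0-E1) - 1 = s*r*(E0-E1) - E0 := by ring
    rw [h1]
    have h2 : |s*r*(E0-E1) - E0| ≤ |s*r*(E0-E1)| + |E0| := by
      rw [sub_eq_add_neg]
      refine le_trans (abs_add_le _ _) ?_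
      rw [abs_neg]
    have h3 : |s*r*(E0-E1)| = |s| * (r * |E0-E1|) := by
      rw [abs_mul, abs_mul, abs_of_nonneg hr0, mul_assoc]
    have h4 : |E0 - E1| ≤ 2*tl := abs_le.2 ⟨by linarith, by linarith⟩
    have h5 : r * |E0-E1| ≤ NR * (2*tl) :=
      mul_le_mul hrN h4 (abs_nonneg _) hNpos.le
    have h6 : |s| * (r * |E0-E1|) ≤ 1 * (NR * (2*tl)) :=
      mul_le_mul hs h5 (mul_nonneg hr0 (abs_nonneg _)) (by norm_num)
    have h7 : |E0| = E0 := abs_of_nonneg hE0nn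
    nlinarith [htlN]
  have hMb : ∀ M s : ℝ, 0 < M → |s| ≤ 1 → M * (1 - E0 + s * r * (E0 - E1)) = 1 →
      |M - 1| ≤ 12*NR*tl ∧ M ≤ 2 := by
    intro M s hM hs hMS
    have h1 := hS s hs
    have habs := abs_le.1 h1
    have hSge : 1/2 ≤ (1 - E0) + s*r*(E0-E1) := by nlinarith [hNtl100]
    have hMle : M ≤ 2 := by nlinarith
    refine ⟨?_, hMle⟩
    have h2 : M - 1 = M * (1 - ((1 - E0) + s*r*(E0-E1))) := by
      linear_combination hMS
    rw [h2, abs_mul, abs_of_pos hM, abs_sub_comm]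
    calc M * |(1 - E0) + s*r*(E0-E1) - 1| ≤ 2 * (6*NR*tl) :=
          mul_le_mul hMle h1 (abs_nonneg _) (by norm_num)
      _ = 12*NR*tl := by ring
  obtain ⟨hM0b, hM0le⟩ := hMb M0 (-1) hM0 (by norm_num) hf0
  obtain ⟨hM1b, hM1le⟩ := hMb M1 1 hM1 (by norm_num) hf1
  have hcnn : (0:ℝ) ≤ 12*NR*tl := by nlinarith
  -- pointwise bounds
  have huabs : ∀ s : ℝ, |s| ≤ 1 → ∀ x ∈ I,
      |gpdf 0 x + s*r*((gpdf μ x + gpdf (-μ) x)/2 - gpdf 0 x)| ≤ 3*gpdf 0 x := by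
    intro s hs x hx
    have hx' : -T ≤ x ∧ x ≤ T := by rwa [hIdef, mem_Icc] at hx
    have hx2 : x^2 ≤ T^2 := by nlinarith [hx'.1, hx'.2]
    have hμx : |μ*x| ≤ 1 := by
      have h1 : (μ*x)^2 ≤ μ^2*T^2 := by
        rw [mul_pow]; exact mul_le_mul_of_nonneg_left hx2 (sq_nonneg μ)
      have h2 : (μ*x)^2 ≤ 1 := by nlinarith [hμsq, hδ12, hT2, sq_nonneg μ, hL]
      nlinarith [abs_nonneg (μ*x), sq_abs (μ*x)]
    have hg := gauss_diff_bound μ x hμx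
    have hr2 : r * ((μ*x)^2 + μ^2/2) ≤ 2 := by
      have hb1 : (μ*x)^2 + μ^2/2 ≤ μ^2*(10*L) := by
        nlinarith [mul_le_mul_of_nonneg_left hx2 (sq_nonneg μ), hT2, hL, sq_nonneg μ]
      have hb2 : r*((μ*x)^2 + μ^2/2) ≤ r*(μ^2*(10*L)) := mul_le_mul_of_nonneg_left hb1 hr0
      nlinarith [hrμ]
    have hDb : r * |(gpdf μ x + gpdf (-μ) x)/2 - gpdf 0 x| ≤ 2 * gpdf 0 x := by
      have c1 : r * |(gpdf μ x + gpdf (-μ) x)/2 - gpdf 0 x|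
          ≤ r * (((μ*x)^2 + μ^2/2) * gpdf 0 x) := mul_le_mul_of_nonneg_left hg hr0
      have c3 : (r*((μ*x)^2 + μ^2/2))*gpdf 0 x ≤ 2*gpdf 0 x :=
        mul_le_mul_of_nonneg_right hr2 (gpdf_nonneg 0 x)
      nlinarith
    calc |gpdf 0 x + s*r*((gpdf μ x + gpdf (-μ) x)/2 - gpdf 0 x)|
        ≤ |gpdf 0 x| + |s*r*((gpdf μ x + gpdf (-μ) x)/2 - gpdf 0 x)| := abs_add_le _ _
      _ = gpdf 0 x + |s| * (r * |(gpdf μ x + gpdf (-μ) x)/2 - gpdf 0 x|) := by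
          rw [abs_of_nonneg (gpdf_nonneg 0 x), abs_mul, abs_mul, abs_of_nonneg hr0, mul_assoc]
      _ ≤ gpdf 0 x + 1*(2*gpdf 0 x) := by
          have := mul_le_mul hs hDb (mul_nonneg hr0 (abs_nonneg _)) (by norm_num : (0:ℝ) ≤ 1)
          linarith
      _ = 3*gpdf 0 x := by ring
  have hbr : ∀ x : ℝ, δ*(r*((gpdf μ x + gpdf (-μ) x)/2 - gpdf 0 x))
      = (gpdf μ x + gpdf (-μ) x)/2 - gpdf 0 x := by
    intro x
    rcases hrδ ((gpdf μ x + gpdf (-μ) x)/2 - gpdf 0 x) with h | h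
    · exact h
    · have hμ0 := hμδ h
      subst hμ0
      rw [neg_zero]
      ring
  -- integrability
  have hΦi : Integrable (gpdf 0) := gpdf_integrable 0
  have hΨi : Integrable (fun y => (gpdf μ y + gpdf (-μ) y)/2) :=
    ((gpdf_integrable μ).add (gpdf_integrable (-μ))).div_const 2
  have hDi : Integrable (fun y => (gpdf μ y + gpdf (-μ) y)/2 - gpdf 0 y) := hΨi.sub hΦi
  have hui : ∀ s : ℝ, Integrable
      (fun y => gpdf 0 y + s * r * ((gpdf μ y + gpdf (-μ) y)/2 - gpdf 0 y)) :=
    fun s => hΦi.add (hDi.const_mul _)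
  have hind : ∀ M s : ℝ, Integrable (I.indicator (fun y => M * (gpdf 0 y
      + s * r * ((gpdf μ y + gpdf (-μ) y)/2 - gpdf 0 y)))) :=
    fun M s => ((hui s).const_mul M).indicator hI
  have hfinal : ∀ X : ℝ, X ≤ 3*(12*NR*tl) + 2*tl → (1/2) * X ≤ 100/NR^3 := by
    intro X hX
    have hp3 : (0:ℝ) < NR^3 := by positivity
    have hi3 : (0:ℝ) < (NR^3)⁻¹ := by positivity
    have h1 : X ≤ 38*(NR^3)⁻¹ := by nlinarith [htlN, hNtl3]
    rw [show (100:ℝ)/NR^3 = 100*(NR^3)⁻¹ from div_eq_mul_inv 100 _]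
    nlinarith
  constructor
  · -- part 1
    have hb := tv_bound I hI
      (fun x => (I.indicator (fun y => M0 * (gpdf 0 y
          + -1 * r * ((gpdf μ y + gpdf (-μ) y)/2 - gpdf 0 y))) x
        + I.indicator (fun y => M1 * (gpdf 0 y
          + 1 * r * ((gpdf μ y + gpdf (-μ) y)/2 - gpdf 0 y))) x)/2 - gpdf 0 x)
      (gpdf 0) (3*(12*NR*tl)) (2*tl)
      (((((hind M0 (-1)).add (hind M1 1)).div_const 2)).sub hΦi)
      (by
        intro x hx
        beta_reduce
        rw [Set.indicator_of_mem hx, Set.indicator_of_mem hx]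
        have hu0 := huabs (-1) (by norm_num) x hx
        have hu1 := huabs 1 (by norm_num) x hx
        have hrw : (M0 * (gpdf 0 x + -1*r*((gpdf μ x + gpdf (-μ) x)/2 - gpdf 0 x))
              + M1 * (gpdf 0 x + 1*r*((gpdf μ x + gpdf (-μ) x)/2 - gpdf 0 x)))/2 - gpdf 0 x
            = ((M0-1) * (gpdf 0 x + -1*r*((gpdf μ x + gpdf (-μ) x)/2 - gpdf 0 x))
              + (M1-1) * (gpdf 0 x + 1*r*((gpdf μ x + gpdf (-μ) x)/2 - gpdf 0 x)))/2 := by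
          ring
        rw [hrw]
        exact abs_comb_bound (M0-1) (M1-1) _ _ (gpdf 0 x) (12*NR*tl) hM0b hM1b hu0 hu1 hcnn
      )
      (by
        intro x hx
        beta_reduce
        rw [Set.indicator_of_notMem hx, Set.indicator_of_notMem hx]
        rw [show ((0:ℝ)+0)/2 - gpdf 0 x = -(gpdf 0 x) by ring, abs_neg,
          abs_of_nonneg (gpdf_nonneg 0 x)]
      )
      (by nlinarith)
      (by rw [← hE0def]; exact hE0)
    exact hfinal _ hb
  · -- part 2
    have hΨnn : ∀ x : ℝ, 0 ≤ (gpdf μ x + gpdf (-μ) x)/2 := by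
      intro x
      have := gpdf_nonneg μ x; have := gpdf_nonneg (-μ) x; linarith
    have hb := tv_bound I hI
      (fun x => δ * I.indicator (fun y => M1 * (gpdf 0 y
          + 1 * r * ((gpdf μ y + gpdf (-μ) y)/2 - gpdf 0 y))) x
        + (1-δ) * ((I.indicator (fun y => M0 * (gpdf 0 y
          + -1 * r * ((gpdf μ y + gpdf (-μ) y)/2 - gpdf 0 y))) x
          + I.indicator (fun y => M1 * (gpdf 0 y
          + 1 * r * ((gpdf μ y + gpdf (-μ) y)/2 - gpdf 0 y))) x)/2)
        - (gpdf μ x + gpdf (-μ) x)/2)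
      (fun x => (gpdf μ x + gpdf (-μ) x)/2) (3*(12*NR*tl)) (2*tl)
      ((((hind M1 1).const_mul δ).add
        ((((hind M0 (-1)).add (hind M1 1)).div_const 2).const_mul (1-δ))).sub hΨi)
      (by
        intro x hx
        beta_reduce
        rw [Set.indicator_of_mem hx, Set.indicator_of_mem hx]
        have hu0 := huabs (-1) (by norm_num) x hx
        have hu1 := huabs 1 (by norm_num) x hx
        have hkey : δ * (M1 * (gpdf 0 x + 1*r*((gpdf μ x + gpdf (-μ) x)/2 - gpdf 0 x)))
              + (1-δ) * ((M0 * (gpdf 0 x + -1*r*((gpdf μ x + gpdf (-μ) x)/2 - gpdf 0 x))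
                + M1 * (gpdf 0 x + 1*r*((gpdf μ x + gpdf (-μ) x)/2 - gpdf 0 x)))/2)
              - (gpdf μ x + gpdf (-μ) x)/2
            = δ*((M1-1) * (gpdf 0 x + 1*r*((gpdf μ x + gpdf (-μ) x)/2 - gpdf 0 x)))
              + (1-δ)*(((M0-1) * (gpdf 0 x + -1*r*((gpdf μ x + gpdf (-μ) x)/2 - gpdf 0 x))
                + (M1-1) * (gpdf 0 x + 1*r*((gpdf μ x + gpdf (-μ) x)/2 - gpdf 0 x)))/2) := by
          linear_combination hbr x
        rw [hkey]
        exact abs_comb_bound2 δ (M0-1) (M1-1) _ _ (gpdf 0 x) (12*NR*tl)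
          hδ0 (by linarith) hM0b hM1b hu0 hu1 hcnn
      )
      (by
        intro x hx
        beta_reduce
        rw [Set.indicator_of_notMem hx, Set.indicator_of_notMem hx]
        rw [show δ*(0:ℝ) + (1-δ)*((0+0)/2) - (gpdf μ x + gpdf (-μ) x)/2
            = -((gpdf μ x + gpdf (-μ) x)/2) by ring, abs_neg, abs_of_nonneg (hΨnn x)]
      )
      (by nlinarith)
      (by rw [← hE1def]; exact hE1)
    exact hfinal _ hb

set_option maxHeartbeats 4000000 in
/-- With `h_{μ,0} = (f_{μ,0} + f_{μ,1})/2` and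
`h_{μ,1} = δ_N f_{μ,1} + (1 − δ_N)(f_{μ,0} + f_{μ,1})/2`, there is an absolute
constant `C > 0` such that for all `N ≥ 12`, `k ≤ N/12`, `|μ| ≤ 3√(η_N log N)`
(where `δ_N = k/N`, `η_N = k/(45N(log N)²)` and `M₀, M₁` are the normalizing
constants): `TV(h_{μ,0}, φ₀) ≤ C N⁻³` and `TV(h_{μ,1}, φ̄_μ) ≤ C N⁻³`. -/
theorem stmt10 : ∃ C : ℝ, 0 < C ∧ ∀ (N k : ℕ) (μ M0 M1 : ℝ),
    12 ≤ N → (k : ℝ) ≤ (N : ℝ) / 12 →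
    |μ| ≤ 3 * Real.sqrt ((k : ℝ) / (45 * N * Real.log N ^ 2) * Real.log N) →
    0 < M0 → 0 < M1 →
    (∫ x, fdens N ((k : ℝ) / N) M0 μ (-1) x) = 1 →
    (∫ x, fdens N ((k : ℝ) / N) M1 μ 1 x) = 1 →
    (1 / 2) * (∫ x, |(fdens N ((k : ℝ) / N) M0 μ (-1) x
          + fdens N ((k : ℝ) / N) M1 μ 1 x) / 2 - gpdf 0 x|)
        ≤ C / (N : ℝ) ^ 3
    ∧ (1 / 2) * (∫ x, |((k : ℝ) / N) * fdens N ((k : ℝ) / N) M1 μ 1 x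
          + (1 - (k : ℝ) / N) * ((fdens N ((k : ℝ) / N) M0 μ (-1) x
            + fdens N ((k : ℝ) / N) M1 μ 1 x) / 2)
          - (gpdf μ x + gpdf (-μ) x) / 2|)
        ≤ C / (N : ℝ) ^ 3 := by
  refine ⟨100, by norm_num, ?_⟩
  intro N k μ M0 M1 hN hk hμ hM0 hM1 hf0 hf1
  have hNpos : (0:ℝ) < N := by
    have : 0 < N := by omega
    exact_mod_cast this
  have hN12 : (12:ℝ) ≤ N := by exact_mod_cast hN
  set L := Real.log N with hLdef
  have hexpL : Real.exp L = N := Real.exp_log hNpos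
  have hL : 2 ≤ L := by
    have h1 : Real.exp 1 < 2.7182818286 := Real.exp_one_lt_d9
    have h2 : Real.exp 2 = Real.exp 1 * Real.exp 1 := by
      rw [← Real.exp_add]; norm_num
    have h3 : Real.exp 2 ≤ Real.exp L := by
      rw [hexpL]; nlinarith [Real.exp_pos 1]
    exact le_of_not_gt fun hc => absurd h3 (not_le.2 (Real.exp_lt_exp.2 hc))
  have hL0 : (0:ℝ) ≤ L := by linarith
  set T := 3 * Real.sqrt L with hTdef
  have hsq : Real.sqrt L ^ 2 = L := Real.sq_sqrt hL0
  have hs0 : 0 ≤ Real.sqrt L := Real.sqrt_nonneg L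
  have hs14 : 1.4 ≤ Real.sqrt L := by nlinarith
  have hT2 : T ^ 2 = 9 * L := by rw [hTdef]; nlinarith
  have hT4 : 4 ≤ T := by rw [hTdef]; nlinarith
  set δ := (k:ℝ)/N with hδdef
  have hδ0 : (0:ℝ) ≤ δ := by rw [hδdef]; positivity
  have hδ12 : δ ≤ 1/12 := by
    rw [hδdef, div_le_div_iff₀ hNpos (by norm_num : (0:ℝ) < 12)]
    nlinarith
  set r := δ⁻¹ with hrdef
  have hr0 : (0:ℝ) ≤ r := by rw [hrdef]; positivity
  have hrδ : ∀ x : ℝ, δ * (r * x) = x ∨ δ = 0 := by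
    intro x
    rcases eq_or_ne δ 0 with h | h
    · exact Or.inr h
    · left; rw [hrdef, ← mul_assoc, mul_inv_cancel₀ h, one_mul]
  have hrN : r ≤ N := by
    rcases Nat.eq_zero_or_pos k with hk0 | hk1
    · rw [hrdef, hδdef, hk0]
      simp
    · have hk1' : (1:ℝ) ≤ k := by exact_mod_cast hk1
      have hδpos : 0 < δ := by rw [hδdef]; positivity
      rw [hrdef]
      rw [inv_le_iff_one_le_mul₀ hδpos, hδdef]
      have heq : (↑N * (↑k/↑N) : ℝ) = k := by field_simp
      rw [heq]
      exact hk1'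
  -- μ facts
  have hLne : L ≠ 0 := by linarith
  have harg : (k:ℝ)/(45*(N:ℝ)*L^2)*L = δ/(45*L) := by
    rw [hδdef]; field_simp
  rw [harg] at hμ
  have hμsq : 5*L*μ^2 ≤ δ := by
    have h0 : (0:ℝ) ≤ δ/(45*L) := div_nonneg hδ0 (by linarith)
    have h2 : |μ|^2 ≤ (3*Real.sqrt (δ/(45*L)))^2 := pow_le_pow_left₀ (abs_nonneg μ) hμ 2
    have h3 : (3*Real.sqrt (δ/(45*L)))^2 = 9*(δ/(45*L)) := by
      rw [mul_pow, Real.sq_sqrt h0]; norm_num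
    have h4 : δ/(45*L)*(45*L) = δ := div_mul_cancel₀ δ (by linarith : (0:ℝ) < 45*L).ne'
    have h5 : μ^2 = |μ|^2 := (sq_abs μ).symm
    nlinarith [h2]
  have hk0μ : k = 0 → μ = 0 := by
    intro h
    have hδz : δ = 0 := by rw [hδdef, h]; simp
    rw [hδz] at hμ
    simp only [zero_div, Real.sqrt_zero, mul_zero] at hμ
    exact abs_nonpos_iff.mp hμ
  have hμ110 : |μ| ≤ 1/10 := by
    nlinarith [sq_abs μ, abs_nonneg μ, sq_nonneg μ]
  have hrδ1 : r * δ ≤ 1 := by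
    rcases eq_or_ne δ 0 with h | h
    · rw [h, mul_zero]; norm_num
    · rw [hrdef, inv_mul_cancel₀ h]
  have hrμ : r * (5*L*μ^2) ≤ 1 := le_trans (mul_le_mul_of_nonneg_left hμsq hr0) hrδ1
  -- tail bounds
  set I : Set ℝ := Icc (-T) T with hIdef
  have hI : MeasurableSet I := measurableSet_Icc
  set tl := Real.exp (-(17/4) * L) with htldef
  have htl0 : 0 < tl := Real.exp_pos _
  set E0 := ∫ x in Iᶜ, gpdf 0 x with hE0def
  set E1 := ∫ x in Iᶜ, (gpdf μ x + gpdf (-μ) x)/2 with hE1def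
  have hE0 : E0 ≤ 2 * tl := by
    refine le_trans (gpdf_tail_two 0 T (by simp; linarith)) ?_
    have h1 : -(T - |(0:ℝ)|)^2/2 ≤ -(17/4)*L := by
      simp only [abs_zero, sub_zero]
      nlinarith
    nlinarith [Real.exp_le_exp.2 h1]
  have hE1 : E1 ≤ 2 * tl := by
    have hsplit : E1 = ((∫ x in Iᶜ, gpdf μ x) + ∫ x in Iᶜ, gpdf (-μ) x)/2 := by
      rw [hE1def, integral_div,
        integral_add ((gpdf_integrable μ).integrableOn) ((gpdf_integrable (-μ)).integrableOn)]
    have t1 := gpdf_tail_two μ T (by linarith)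
    have t2 := gpdf_tail_two (-μ) T (by rw [abs_neg]; linarith)
    rw [abs_neg] at t2
    have harg2 : -(T - |μ|)^2/2 ≤ -(17/4)*L := by
      nlinarith [abs_nonneg μ, sq_abs μ]
    have he := Real.exp_le_exp.2 harg2
    rw [hsplit]
    nlinarith [t1, t2]
  have hE0nn : 0 ≤ E0 := setIntegral_nonneg hI.compl (fun x _ => gpdf_nonneg 0 x)
  have hE1nn : 0 ≤ E1 := setIntegral_nonneg hI.compl (fun x _ => by
    have := gpdf_nonneg μ x; have := gpdf_nonneg (-μ) x; linarith)
  -- integral identities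
  have hΦi : Integrable (gpdf 0) := gpdf_integrable 0
  have hΨi : Integrable (fun y => (gpdf μ y + gpdf (-μ) y)/2) :=
    ((gpdf_integrable μ).add (gpdf_integrable (-μ))).div_const 2
  have hDi : Integrable (fun y => (gpdf μ y + gpdf (-μ) y)/2 - gpdf 0 y) := hΨi.sub hΦi
  have hIΦ : ∫ x in I, gpdf 0 x = 1 - E0 := by
    have h := integral_add_compl hI hΦi (f := gpdf 0)
    rw [gpdf_integral 0, ← hE0def] at h
    linarith
  have hΨ1 : ∫ x, (gpdf μ x + gpdf (-μ) x)/2 = 1 := by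
    rw [integral_div, integral_add (gpdf_integrable μ) (gpdf_integrable (-μ)),
      gpdf_integral, gpdf_integral]
    norm_num
  have hIΨ : ∫ x in I, (gpdf μ x + gpdf (-μ) x)/2 = 1 - E1 := by
    have h := integral_add_compl hI hΨi (f := fun y => (gpdf μ y + gpdf (-μ) y)/2)
    rw [hΨ1, ← hE1def] at h
    linarith
  have hID : ∫ x in I, ((gpdf μ x + gpdf (-μ) x)/2 - gpdf 0 x) = E0 - E1 := by
    rw [integral_sub hΨi.integrableOn hΦi.integrableOn, hIΨ, hIΦ]
    ring
  -- fdens rewriting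
  have hfd : ∀ M s x : ℝ, fdens N δ M μ s x
      = I.indicator (fun y => M * (gpdf 0 y
          + s * r * ((gpdf μ y + gpdf (-μ) y)/2 - gpdf 0 y))) x :=
    fun M s x => rfl
  have hui : ∀ s : ℝ, Integrable
      (fun y => gpdf 0 y + s * r * ((gpdf μ y + gpdf (-μ) y)/2 - gpdf 0 y)) :=
    fun s => hΦi.add (hDi.const_mul _)
  have hnorm : ∀ M s : ℝ, (∫ x, fdens N δ M μ s x)
      = M * ((1 - E0) + s * r * (E0 - E1)) := by
    intro M s
    simp only [hfd]
    rw [integral_indicator hI, MeasureTheory.integral_const_mul,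
      integral_add hΦi.integrableOn ((hDi.const_mul (s*r)).integrableOn),
      MeasureTheory.integral_const_mul, hIΦ, hID]
  rw [hnorm M0 (-1)] at hf0
  rw [hnorm M1 1] at hf1
  have hμδ : δ = 0 → μ = 0 := by
    intro h
    apply hk0μ
    have h2 : (k:ℝ)/(N:ℝ) = 0 := by rw [← hδdef]; exact h
    rcases div_eq_zero_iff.mp h2 with h3 | h3
    · exact_mod_cast h3
    · exact absurd h3 hNpos.ne'
  simp only [hfd]
  exact core (N:ℝ) L T δ r tl E0 E1 M0 M1 μ I hI hIdef hN12 hL hexpL hT2 hδ0 hδ12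
    hr0 hrN hrδ hμδ hμsq hrμ htldef hE0def hE1def hE0nn hE1nn hE0 hE1 hIΦ hM0 hM1 hf0 hf1
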